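/- Let U be a separable real Banach space, H a separable real Hilbert space, i : H → U a continuous linear map with Hilbert-adjoint-type dual i* : U* → H characterized by ⟨i*a, h⟩_H = ⟨i h, a⟩ for all h ∈ H, a ∈ U*. Let M : U* → L²(Ω, F, P) be a linear map on a probability space (Ω, F, P) satisfying E[(Ma)(Mb)] = ⟨i*a, i*b⟩_H for all a, b ∈ U*. Let (e_k)_{k∈ℕ} be a Hilbert (orthonormal) basis of H and (a_k)_{k∈ℕ} ⊆ U* with i* a_k = e_k for all k. Then for every a ∈ U*, the partial sums Σ_{k=1}^n ⟨i e_k, a⟩ · M(a_k) converge to M(a) in L²(Ω, F, P) as n → ∞. -/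

import Mathlib

open MeasureTheory Filter
open scoped RealInnerProductSpace

/-- Let i : H → U with dual i* : U* → H (⟪i*a, h⟫ = ⟨i h, a⟩), and let
M : U* → L²(P) be linear with E[(Ma)(Mb)] = ⟪i*a, i*b⟫. If (e_k) is an orthonormal
basis of H and i* a_k = e_k, then for every a ∈ U* the partial sums
Σ_{k<n} ⟨i e_k, a⟩ M(a_k) converge to M(a) in L². -/
theorem series_representation_L2
    {U H Ω : Type*} [NormedAddCommGroup U] [NormedSpace ℝ U] [CompleteSpace U]
    [TopologicalSpace.SeparableSpace U]
    [NormedAddCommGroup H] [InnerProductSpace ℝ H] [CompleteSpace H]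
    [TopologicalSpace.SeparableSpace H]
    [MeasurableSpace Ω] (P : Measure Ω) [IsProbabilityMeasure P]
    (i : H →L[ℝ] U) (iStar : (U →L[ℝ] ℝ) → H)
    (hiStar : ∀ (a : U →L[ℝ] ℝ) (h : H), ⟪iStar a, h⟫ = a (i h))
    (M : (U →L[ℝ] ℝ) → Ω → ℝ)
    (hM2 : ∀ a : U →L[ℝ] ℝ, MemLp (M a) 2 P)
    (hMlin : ∀ (a b : U →L[ℝ] ℝ) (c : ℝ),
      ∀ᵐ ω ∂P, M (c • a + b) ω = c * M a ω + M b ω)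
    (hcov : ∀ a b : U →L[ℝ] ℝ, ∫ ω, M a ω * M b ω ∂P = ⟪iStar a, iStar b⟫)
    (e : ℕ → H) (he : Orthonormal ℝ e)
    (hspan : ⊤ ≤ (Submodule.span ℝ (Set.range e)).topologicalClosure)
    (a : ℕ → (U →L[ℝ] ℝ)) (ha : ∀ k, iStar (a k) = e k) :
    ∀ b : U →L[ℝ] ℝ,
      Tendsto (fun n => eLpNorm
          (fun ω => (∑ k ∈ Finset.range n, b (i (e k)) * M (a k) ω) - M b ω) 2 P)
        atTop (nhds 0) := by
  intro b
  set c : ℕ → ℝ := fun k => ⟪iStar b, e k⟫ with hc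
  have hbc : ∀ k, b (i (e k)) = c k := fun k => (hiStar b (e k)).symm
  -- products of L² functions are integrable
  have hint : ∀ p q : U →L[ℝ] ℝ, Integrable (fun ω => M p ω * M q ω) P := by
    intro p q
    have h1 : MemLp ((M p) • (M q)) 1 P := by
      refine (hM2 q).smul (hM2 p) (hpqr := ⟨?_⟩)
      simp only [one_div, inv_one]
      exact ENNReal.inv_two_add_inv_two
    rw [memLp_one_iff_integrable] at h1
    exact h1
  have horth : ∀ j k, ∫ ω, M (a j) ω * M (a k) ω ∂P = if j = k then (1 : ℝ) else 0 := by
    intro j k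
    rw [hcov, ha, ha]
    exact orthonormal_iff_ite.mp he j k
  have hcb : ∀ k, ∫ ω, M (a k) ω * M b ω ∂P = c k := by
    intro k
    rw [hcov, ha, real_inner_comm]
  -- the partial sum functions
  set F : ℕ → Ω → ℝ := fun n ω => ∑ k ∈ Finset.range n, c k * M (a k) ω with hF
  -- key L² computation
  have key : ∀ n, ∫ ω, (F n ω - M b ω) ^ 2 ∂P
      = ‖iStar b‖ ^ 2 - ∑ k ∈ Finset.range n, c k ^ 2 := by
    intro n
    have hFFint : Integrable (fun ω => F n ω * F n ω) P := by
      have : (fun ω => F n ω * F n ω)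
          = fun ω => ∑ j ∈ Finset.range n, ∑ k ∈ Finset.range n,
              (c j * c k) * (M (a j) ω * M (a k) ω) := by
        funext ω
        rw [hF]
        simp only [Finset.sum_mul_sum]
        congr 1; funext j; congr 1; funext k; ring
      rw [this]
      exact integrable_finset_sum _ fun j _ =>
        integrable_finset_sum _ fun k _ => ((hint (a j) (a k)).const_mul _)
    have hFbint : Integrable (fun ω => F n ω * M b ω) P := by
      have : (fun ω => F n ω * M b ω)
          = fun ω => ∑ k ∈ Finset.range n, c k * (M (a k) ω * M b ω) := by
        funext ω
        rw [hF, Finset.sum_mul]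
        congr 1; funext k; ring
      rw [this]
      exact integrable_finset_sum _ fun k _ => ((hint (a k) b).const_mul _)
    have hbbint : Integrable (fun ω => M b ω * M b ω) P := hint b b
    have expand : (fun ω => (F n ω - M b ω) ^ 2)
        = fun ω => F n ω * F n ω - 2 * (F n ω * M b ω) + M b ω * M b ω := by
      funext ω; ring
    have hsub : Integrable (fun ω => F n ω * F n ω - 2 * (F n ω * M b ω)) P :=
      hFFint.sub (hFbint.const_mul 2)
    rw [expand, integral_add hsub hbbint, integral_sub hFFint (hFbint.const_mul 2),
      integral_const_mul]
    have hFF : ∫ ω, F n ω * F n ω ∂P = ∑ k ∈ Finset.range n, c k ^ 2 := by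
      have h1 : (fun ω => F n ω * F n ω)
          = fun ω => ∑ j ∈ Finset.range n, ∑ k ∈ Finset.range n,
              (c j * c k) * (M (a j) ω * M (a k) ω) := by
        funext ω
        rw [hF]
        simp only [Finset.sum_mul_sum]
        congr 1; funext j; congr 1; funext k; ring
      rw [h1, integral_finset_sum _ fun j _ =>
        integrable_finset_sum _ fun k _ => ((hint (a j) (a k)).const_mul _)]
      have h2 : ∀ j ∈ Finset.range n,
          (∫ ω, ∑ k ∈ Finset.range n, (c j * c k) * (M (a j) ω * M (a k) ω) ∂P)
          = if j ∈ Finset.range n then c j ^ 2 else 0 := by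
        intro j hj
        rw [integral_finset_sum _ fun k _ => ((hint (a j) (a k)).const_mul _)]
        have : ∀ k ∈ Finset.range n,
            (∫ ω, (c j * c k) * (M (a j) ω * M (a k) ω) ∂P)
            = if j = k then c j * c k else 0 := by
          intro k _
          rw [integral_const_mul, horth]
          split <;> simp
        rw [Finset.sum_congr rfl this, Finset.sum_ite_eq (Finset.range n) j (fun k => c j * c k)]
        simp [hj, sq]
      rw [Finset.sum_congr rfl h2]
      refine Finset.sum_congr rfl fun k hk => ?_
      simp [Finset.mem_range.mp hk]
    have hFb : ∫ ω, F n ω * M b ω ∂P = ∑ k ∈ Finset.range n, c k ^ 2 := by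
      have h1 : (fun ω => F n ω * M b ω)
          = fun ω => ∑ k ∈ Finset.range n, c k * (M (a k) ω * M b ω) := by
        funext ω
        rw [hF, Finset.sum_mul]
        congr 1; funext k; ring
      rw [h1, integral_finset_sum _ fun k _ => ((hint (a k) b).const_mul _)]
      congr 1; funext k
      rw [integral_const_mul, hcb, sq]
    have hbb : ∫ ω, M b ω * M b ω ∂P = ‖iStar b‖ ^ 2 := by
      rw [hcov, real_inner_self_eq_norm_sq]
    rw [hFF, hFb, hbb]; ring
  -- Parseval
  have hsum : Tendsto (fun n => ∑ k ∈ Finset.range n, c k ^ 2) atTop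
      (nhds (‖iStar b‖ ^ 2)) := by
    set hb : HilbertBasis ℕ ℝ H := HilbertBasis.mk he hspan with hhb
    have hcoe : ⇑hb = e := HilbertBasis.coe_mk he hspan
    have := hb.hasSum_inner_mul_inner (iStar b) (iStar b)
    rw [real_inner_self_eq_norm_sq] at this
    have h2 : HasSum (fun k => c k ^ 2) (‖iStar b‖ ^ 2) := by
      convert this using 2 with k
      case e'_3 => rfl
      rw [hcoe, sq, hc]
      simp [real_inner_comm]
    exact h2.tendsto_sum_nat
  have hI0 : Tendsto (fun n => ∫ ω, (F n ω - M b ω) ^ 2 ∂P) atTop (nhds 0) := by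
    simp only [key]
    have := hsum.const_sub (‖iStar b‖ ^ 2)
    simpa using this
  -- convert to eLpNorm
  have hmem : ∀ n, MemLp (fun ω => F n ω - M b ω) 2 P := by
    intro n
    exact (memLp_finset_sum _ fun k _ => (hM2 (a k)).const_mul (c k)).sub (hM2 b)
  have heq : ∀ n, eLpNorm (fun ω => F n ω - M b ω) 2 P
      = ENNReal.ofReal (Real.sqrt (∫ ω, (F n ω - M b ω) ^ 2 ∂P)) := by
    intro n
    rw [(hmem n).eLpNorm_eq_integral_rpow_norm two_ne_zero ENNReal.ofNat_ne_top,
      Real.sqrt_eq_rpow]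
    norm_num [Real.rpow_two, Real.norm_eq_abs, sq_abs]
  have hgoal : Tendsto (fun n => eLpNorm (fun ω => F n ω - M b ω) 2 P) atTop (nhds 0) := by
    simp only [heq]
    have h1 : Tendsto (fun n => Real.sqrt (∫ ω, (F n ω - M b ω) ^ 2 ∂P)) atTop (nhds 0) := by
      have := (Real.continuous_sqrt.tendsto 0).comp hI0
      simpa [Function.comp_def] using this
    have h2 := (ENNReal.continuous_ofReal.tendsto 0).comp h1
    simpa [Function.comp_def] using h2
  simpa only [hF, hbc] using hgoal
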